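/- Let H have compact SVD H = U₁ΣV₁ᵀ and let a be a vector with m = U₁ᵀa, p = a − U₁m, and suppose p ≠ 0. Set P = p/‖p‖₂. Then [H a] = [U₁ P] · K · W, where K = [[Σ, m],[0, ‖p‖₂]] and W is the block matrix [[V₁ᵀ, 0],[0, 1]] appropriately arranged, and [U₁ P] has orthonormal columns. -/

import Mathlib

open Matrix

/-- A vector viewed as a single-column matrix. -/
def colVec {m : ℕ} (v : Fin m → ℝ) : Matrix (Fin m) Unit ℝ :=
  Matrix.of fun i _ => v i

/-- SVD rank-increasing update factorization.  With m = U₁ᵀa,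
p = a − U₁m ≠ 0 and P = p/‖p‖₂, one has [H a] = [U₁ P] · K · W with
K = [[Σ, m],[0, ‖p‖₂]], W = [[V₁ᵀ, 0],[0, 1]], and [U₁ P] has orthonormal columns. -/
theorem svd_append_col_factorization {m n r : ℕ}
    (H : Matrix (Fin m) (Fin n) ℝ)
    (U₁ : Matrix (Fin m) (Fin r) ℝ) (S : Matrix (Fin r) (Fin r) ℝ)
    (V₁ : Matrix (Fin n) (Fin r) ℝ)
    (hU : U₁ᵀ * U₁ = 1) (hV : V₁ᵀ * V₁ = 1)
    (hS : S.IsDiag) (hSpos : ∀ i, 0 < S i i)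
    (hH : H = U₁ * S * V₁ᵀ)
    (a : Fin m → ℝ) (mm : Fin r → ℝ) (p : Fin m → ℝ) (P : Fin m → ℝ)
    (hmm : mm = U₁ᵀ *ᵥ a) (hp : p = a - U₁ *ᵥ mm) (hp0 : p ≠ 0)
    (hPdef : P = (Real.sqrt (p ⬝ᵥ p))⁻¹ • p) :
    Matrix.fromCols H (colVec a) =
      Matrix.fromCols U₁ (colVec P) *
        fromBlocks S (colVec mm) 0 (Matrix.of fun _ _ => Real.sqrt (p ⬝ᵥ p) : Matrix Unit Unit ℝ) *
        fromBlocks V₁ᵀ 0 0 (1 : Matrix Unit Unit ℝ) ∧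
    (Matrix.fromCols U₁ (colVec P))ᵀ * Matrix.fromCols U₁ (colVec P) = 1 := by
  set s := Real.sqrt (p ⬝ᵥ p) with hs
  have hpp : (0:ℝ) < p ⬝ᵥ p := by
    rcases lt_or_eq_of_le (Finset.sum_nonneg fun i _ => mul_self_nonneg (p i) : (0:ℝ) ≤ p ⬝ᵥ p) with h | h
    · exact h
    · exact absurd ((dotProduct_self_eq_zero).mp h.symm) hp0
  have hspos : 0 < s := Real.sqrt_pos.mpr hpp
  have hs0 : s ≠ 0 := ne_of_gt hspos
  have hss : s * s = p ⬝ᵥ p := Real.mul_self_sqrt (le_of_lt hpp)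
  have hUp : U₁ᵀ *ᵥ p = 0 := by
    have : U₁ᵀ *ᵥ (U₁ *ᵥ mm) = mm := by
      rw [Matrix.mulVec_mulVec, hU, Matrix.one_mulVec]
    rw [hp, Matrix.mulVec_sub, this, ← hmm, sub_self]
  have hsP : ∀ i, s * P i = p i := by
    intro i
    rw [hPdef]
    simp [Pi.smul_apply, smul_eq_mul]
    field_simp
  constructor
  · rw [Matrix.fromCols_mul_fromBlocks, Matrix.fromCols_mul_fromBlocks]
    ext i j
    rcases j with j | j
    · simp [hH, Matrix.mul_assoc, Matrix.mul_apply]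
    · simp only [Matrix.fromCols, Matrix.of_apply, Sum.elim_inr]
      simp only [Matrix.mul_zero, Matrix.add_mul, Matrix.mul_one, Matrix.zero_apply, zero_add,
        Matrix.add_apply, Matrix.mul_apply, colVec, Matrix.of_apply]
      have h1 : ∑ k, U₁ i k * mm k = (U₁ *ᵥ mm) i := rfl
      have : a i = (U₁ *ᵥ mm) i + p i := by
        rw [hp]; simp
      simp only [Finset.univ_unique, Finset.sum_singleton, h1]
      rw [this, mul_comm, hsP]
  · rw [Matrix.transpose_fromCols, Matrix.fromRows_mul_fromCols,
      ← Matrix.fromBlocks_one]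
    refine Matrix.fromBlocks_inj.mpr ⟨hU, ?_, ?_, ?_⟩
    · ext i j
      have : ∑ k, U₁ k i * P k = (U₁ᵀ *ᵥ P) i := by
        simp [Matrix.mulVec, dotProduct, Matrix.transpose_apply]
      simp only [Matrix.mul_apply, colVec, Matrix.transpose_apply, Matrix.of_apply,
        Matrix.zero_apply]
      rw [this, hPdef, Matrix.mulVec_smul, hUp]
      simp
    · ext i j
      have : ∑ k, P k * U₁ k j = (U₁ᵀ *ᵥ P) j := by
        simp [Matrix.mulVec, dotProduct, Matrix.transpose_apply, mul_comm]
      simp only [Matrix.mul_apply, colVec, Matrix.transpose_apply, Matrix.of_apply,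
        Matrix.zero_apply]
      rw [this, hPdef, Matrix.mulVec_smul, hUp]
      simp
    · ext i j
      simp only [Matrix.mul_apply, colVec, Matrix.transpose_apply, Matrix.of_apply,
        Matrix.one_apply]
      have : ∑ k, P k * P k = P ⬝ᵥ P := rfl
      rw [this, hPdef]
      simp only [smul_dotProduct, dotProduct_smul, smul_eq_mul]
      rw [← mul_assoc, ← Real.sqrt_inv, Real.mul_self_sqrt (by positivity),
        inv_mul_cancel₀ (ne_of_gt hpp)]
      simp
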